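/- Let ρ: SL(2,F_q) → GL(H) be the Weil representation (q odd) with dim H = q and character ch_ρ(g) = σ(−det(g−I)) for g−I invertible. Let T be a maximal torus (split or inert) of SL(2,F_q). Then the restriction of ch_ρ to T \ {I} equals σ_T if T is split and equals −σ_T if T is inert, where σ_T is the unique quadratic character of T. -/

import Mathlib

open Matrix

private lemma det_sub_smul_one {R : Type*} [CommRing R] (α : R) (A : Matrix (Fin 2) (Fin 2) R) :
    (A - α • 1).det = α ^ 2 - A.trace * α + A.det := by
  simp [Matrix.det_fin_two, Matrix.trace_fin_two, Matrix.sub_apply, Matrix.smul_apply,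
    Matrix.one_apply]
  ring

private lemma det_sub_one_fin_two {R : Type*} [CommRing R] (A : Matrix (Fin 2) (Fin 2) R) :
    (A - 1).det = A.det - A.trace + 1 := by
  simp [Matrix.det_fin_two, Matrix.trace_fin_two, Matrix.sub_apply, Matrix.one_apply]
  ring

private lemma key_char {F : Type*} [Field F] [Fintype F] [DecidableEq F]
    (hodd : Odd (Fintype.card F))
    (γ : Matrix.SpecialLinearGroup (Fin 2) F)
    (hx : ∀ j : ℕ, γ ^ j ≠ 1 → Matrix.trace ((γ : Matrix (Fin 2) (Fin 2) F) ^ j) ≠ 2)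
    (ε : ℤ) (n : ℕ) (hn : orderOf γ = n)
    (hcase : (ε = 1 ∧ n = Fintype.card F - 1) ∨ (ε = -1 ∧ n = Fintype.card F + 1))
    (k : ℕ) (hk : γ ^ k ≠ 1) :
    (quadraticChar F (Matrix.trace ((γ : Matrix (Fin 2) (Fin 2) F) ^ k) - 2) : ℤ)
      = ε * (-1) ^ k := by
  obtain ⟨m, hm⟩ := hodd
  have hq2 : 1 < Fintype.card F := Fintype.one_lt_card
  have hm1 : 1 ≤ m := by omega
  -- characteristic
  set p := ringChar F with hp_def
  obtain ⟨r, hp, hq⟩ := FiniteField.card F p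
  have hp2 : p ≠ 2 := by
    rintro h
    have h2 : (2 : ℕ) ∣ Fintype.card F := by
      rw [hq, h]; exact dvd_pow_self 2 r.ne_zero
    omega
  haveI : Fact p.Prime := ⟨hp⟩
  have hF2 : ringChar F ≠ 2 := hp2
  set K := AlgebraicClosure F with hK_def
  set φ := algebraMap F K with hφ_def
  have hφ : Function.Injective φ := φ.injective
  haveI : CharP K p := charP_of_injective_algebraMap hφ p
  -- the eigenvalue
  set t : F := Matrix.trace (γ : Matrix (Fin 2) (Fin 2) F) with ht_def
  obtain ⟨lam, hroot⟩ := IsAlgClosed.exists_root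
    (Polynomial.C 1 * Polynomial.X ^ 2 + Polynomial.C (-(φ t)) * Polynomial.X + Polynomial.C 1)
    (by rw [Polynomial.degree_quadratic one_ne_zero]; decide)
  have hlam : lam ^ 2 - φ t * lam + 1 = 0 := by
    simp only [Polynomial.IsRoot, Polynomial.eval_add, Polynomial.eval_mul, Polynomial.eval_pow,
      Polynomial.eval_C, Polynomial.eval_X, one_mul, neg_mul] at hroot
    linear_combination hroot
  have hlam0 : lam ≠ 0 := by
    rintro rfl
    simp at hlam
  -- eigenvector
  set Mγ : Matrix (Fin 2) (Fin 2) K := (RingHom.mapMatrix φ) (γ : Matrix (Fin 2) (Fin 2) F)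
    with hMγ_def
  have htrM : ∀ A : Matrix (Fin 2) (Fin 2) F, ((RingHom.mapMatrix φ) A).trace = φ A.trace := by
    intro A
    simp [Matrix.trace_fin_two, RingHom.mapMatrix_apply, Matrix.map_apply]
  have hdetM : ∀ j : ℕ, (Mγ ^ j).det = 1 := by
    intro j
    rw [hMγ_def, ← map_pow, ← _root_.RingHom.map_det, ← Matrix.SpecialLinearGroup.coe_pow,
      Matrix.SpecialLinearGroup.det_coe, _root_.map_one]
  have hdet0 : (Mγ - lam • 1).det = 0 := by
    rw [det_sub_smul_one]
    have h1 : Mγ.trace = φ t := htrM _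
    have h2 : Mγ.det = 1 := by simpa using hdetM 1
    rw [h1, h2]
    linear_combination hlam
  obtain ⟨v, hv0, hv⟩ := (Matrix.exists_mulVec_eq_zero_iff).mpr hdet0
  have hev : Mγ *ᵥ v = lam • v := by
    rwa [Matrix.sub_mulVec, Matrix.smul_mulVec, Matrix.one_mulVec, sub_eq_zero] at hv
  have hevk : ∀ j : ℕ, (Mγ ^ j) *ᵥ v = lam ^ j • v := by
    intro j
    induction j with
    | zero => simp
    | succ j ih =>
      rw [pow_succ, ← Matrix.mulVec_mulVec, hev, Matrix.mulVec_smul, ih, smul_smul, pow_succ']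
  -- trace identity
  have keydet : ∀ j : ℕ,
      lam ^ j * lam ^ j - φ (Matrix.trace ((γ : Matrix (Fin 2) (Fin 2) F) ^ j)) * lam ^ j + 1 = 0 := by
    intro j
    have h1 : ((Mγ ^ j) - lam ^ j • 1).det = 0 := by
      apply (Matrix.exists_mulVec_eq_zero_iff).mp
      exact ⟨v, hv0, by rw [Matrix.sub_mulVec, hevk j, Matrix.smul_mulVec,
        Matrix.one_mulVec, sub_self]⟩
    rw [det_sub_smul_one, hdetM j] at h1
    rw [hMγ_def, ← map_pow, htrM] at h1
    linear_combination h1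
  have htr : ∀ j : ℕ, φ (Matrix.trace ((γ : Matrix (Fin 2) (Fin 2) F) ^ j))
      = lam ^ j + (lam ^ j)⁻¹ := by
    intro j
    have hα : lam ^ j ≠ 0 := pow_ne_zero _ hlam0
    linear_combination (-(lam ^ j)⁻¹) * keydet j
      + (lam ^ j - φ (Matrix.trace ((γ : Matrix (Fin 2) (Fin 2) F) ^ j))) * mul_inv_cancel₀ hα
  have hne1 : ∀ j : ℕ, γ ^ j ≠ 1 → lam ^ j ≠ 1 := by
    intro j hj hcontra
    apply hx j hj
    apply hφ
    rw [htr j, hcontra, map_ofNat]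
    norm_num
  have hlamn : lam ^ n = 1 := by
    have hγn : γ ^ n = 1 := hn ▸ pow_orderOf_eq_one γ
    have hMn : Mγ ^ n = 1 := by
      rw [hMγ_def, ← map_pow, RingHom.mapMatrix_apply, ← Matrix.SpecialLinearGroup.coe_pow, hγn]
      simp
    have h2 := hevk n
    rw [hMn, Matrix.one_mulVec] at h2
    obtain ⟨i, hi⟩ := Function.ne_iff.mp hv0
    have h3 := congrFun h2 i
    simp only [Pi.smul_apply, smul_eq_mul] at h3
    have h4 : (lam ^ n - 1) * v i = 0 := by linear_combination -h3
    rcases mul_eq_zero.mp h4 with h | h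
    · exact sub_eq_zero.mp h
    · exact absurd h hi
  -- facts about small powers of lam
  have hfin : ∀ j : ℕ, 1 ≤ j → j < n → lam ^ j ≠ 1 := by
    intro j h1 h2
    apply hne1 j
    intro hγj
    have hd := Nat.le_of_dvd (by omega) (hn ▸ orderOf_dvd_of_pow_eq_one hγj)
    omega
  have hα0 : lam ^ k ≠ 0 := pow_ne_zero _ hlam0
  have hα1 : lam ^ k ≠ 1 := hne1 k hk
  have hαs1 : lam ^ k - 1 ≠ 0 := sub_ne_zero.mpr hα1
  set x : F := Matrix.trace ((γ : Matrix (Fin 2) (Fin 2) F) ^ k) - 2 with hx_def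
  have hφx : φ x = lam ^ k + (lam ^ k)⁻¹ - 2 := by
    rw [hx_def, map_sub, htr k, map_ofNat]
  have hx0 : x ≠ 0 := by
    intro h
    rw [hx_def] at h
    exact hx k hk (sub_eq_zero.mp h)
  have hsq : lam ^ k + (lam ^ k)⁻¹ - 2 = (lam ^ k)⁻¹ * (lam ^ k - 1) ^ 2 := by
    linear_combination (2 - lam ^ k) * mul_inv_cancel₀ hα0
  have hfrob : (lam ^ k - 1) ^ (Fintype.card F) = (lam ^ k) ^ (Fintype.card F) - 1 := by
    rw [hq, sub_pow_char_pow, one_pow]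
  have hm2 : Fintype.card F / 2 = m := by omega
  rcases hcase with ⟨hε, hncase⟩ | ⟨hε, hncase⟩
  · -- split case : n = q - 1 = 2m
    have hlm : lam ^ m = -1 := by
      have h1 : lam ^ m * lam ^ m = 1 := by
        rw [← pow_add, show m + m = n by omega, hlamn]
      rcases mul_self_eq_one_iff.mp h1 with h | h
      · exact absurd h (hfin m hm1 (by omega))
      · exact h
    have hα2m : (lam ^ k) ^ (2 * m) = 1 := by
      rw [← pow_mul, mul_comm k (2 * m), pow_mul, show 2 * m = n by omega, hlamn, one_pow]
    have hαq : (lam ^ k) ^ (Fintype.card F) = lam ^ k := by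
      rw [hm, pow_succ, hα2m, one_mul]
    have hc1 : (lam ^ k - 1) ^ (2 * m) = 1 := by
      have h2 : (lam ^ k - 1) ^ (2 * m) * (lam ^ k - 1) = lam ^ k - 1 := by
        rw [← pow_succ, show 2 * m + 1 = Fintype.card F by omega, hfrob, hαq]
      exact mul_right_cancel₀ hαs1 (by rw [h2, one_mul])
    have hαm : (lam ^ k) ^ m = (-1 : K) ^ k := by
      rw [← pow_mul, mul_comm, pow_mul, hlm]
    have hpow : x ^ m = (-1 : F) ^ k := by
      apply hφ
      rw [_root_.map_pow, hφx, _root_.map_pow, _root_.map_neg, _root_.map_one, hsq, mul_pow, ← pow_mul, hc1, mul_one,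
        inv_pow, hαm, ← inv_pow, inv_neg, inv_one]
    subst hε
    rw [one_mul]
    rcases Nat.even_or_odd k with hk2 | hk2
    · have hx1 : x ^ (Fintype.card F / 2) = 1 := by rw [hm2, hpow, Even.neg_one_pow hk2]
      rw [(quadraticChar_one_iff_isSquare hx0).mpr ((FiniteField.isSquare_iff hF2 hx0).mpr hx1),
        Even.neg_one_pow hk2]
    · have hx1 : x ^ (Fintype.card F / 2) = -1 := by rw [hm2, hpow, Odd.neg_one_pow hk2]
      have hns : ¬ IsSquare x := by
        rw [FiniteField.isSquare_iff hF2 hx0, hx1]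
        exact fun h => Ring.neg_one_ne_one_of_char_ne_two hF2 h
      rw [quadraticChar_neg_one_iff_not_isSquare.mpr hns, Odd.neg_one_pow hk2]
  · -- inert case : n = q + 1 = 2m + 2
    have hlm : lam ^ (m + 1) = -1 := by
      have h1 : lam ^ (m + 1) * lam ^ (m + 1) = 1 := by
        rw [← pow_add, show m + 1 + (m + 1) = n by omega, hlamn]
      rcases mul_self_eq_one_iff.mp h1 with h | h
      · exact absurd h (hfin (m + 1) (by omega) (by omega))
      · exact h
    have hα2m2 : (lam ^ k) ^ (2 * m + 2) = 1 := by
      rw [← pow_mul, mul_comm k (2 * m + 2), pow_mul, show 2 * m + 2 = n by omega, hlamn,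
        one_pow]
    have hαq : (lam ^ k) ^ (Fintype.card F) * (lam ^ k) = 1 := by
      rw [← pow_succ, hm, show 2 * m + 1 + 1 = 2 * m + 2 from rfl, hα2m2]
    have hαq' : (lam ^ k) ^ (Fintype.card F) = (lam ^ k)⁻¹ :=
      eq_inv_of_mul_eq_one_left hαq
    have h4 : (lam ^ k - 1) ^ (2 * m) = -(lam ^ k)⁻¹ := by
      have h2 : (lam ^ k - 1) ^ (2 * m) * (lam ^ k - 1) = (lam ^ k)⁻¹ - 1 := by
        rw [← pow_succ, show 2 * m + 1 = Fintype.card F by omega, hfrob, hαq']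
      have h3 : (lam ^ k)⁻¹ - 1 = -(lam ^ k)⁻¹ * (lam ^ k - 1) := by
        linear_combination mul_inv_cancel₀ hα0
      rw [h3] at h2
      exact mul_right_cancel₀ hαs1 h2
    have hαm1 : (lam ^ k) ^ (m + 1) = (-1 : K) ^ k := by
      rw [← pow_mul, mul_comm, pow_mul, hlm]
    have hpow : x ^ m = -(-1 : F) ^ k := by
      apply hφ
      rw [_root_.map_pow, hφx, _root_.map_neg, _root_.map_pow, _root_.map_neg, _root_.map_one, hsq, mul_pow, ← pow_mul, h4,
        inv_pow]
      have h5 : ((lam ^ k) ^ m)⁻¹ * -(lam ^ k)⁻¹ = -(((lam ^ k) ^ (m + 1))⁻¹) := by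
        rw [pow_succ, mul_inv]
        ring
      rw [h5, hαm1, ← inv_pow, inv_neg, inv_one]
    subst hε
    rcases Nat.even_or_odd k with hk2 | hk2
    · have hx1 : x ^ (Fintype.card F / 2) = -1 := by
        rw [hm2, hpow, Even.neg_one_pow hk2]
      have hns : ¬ IsSquare x := by
        rw [FiniteField.isSquare_iff hF2 hx0, hx1]
        exact fun h => Ring.neg_one_ne_one_of_char_ne_two hF2 h
      rw [quadraticChar_neg_one_iff_not_isSquare.mpr hns, Even.neg_one_pow hk2]
      norm_num
    · have hx1 : x ^ (Fintype.card F / 2) = 1 := by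
        rw [hm2, hpow, Odd.neg_one_pow hk2, neg_neg]
      rw [(quadraticChar_one_iff_isSquare hx0).mpr ((FiniteField.isSquare_iff hF2 hx0).mpr hx1),
        Odd.neg_one_pow hk2]
      norm_num

/-- The character of the Weil representation of `SL(2,F_q)` restricted to the punctured
maximal torus `T \ {I}` equals `σ_T` if `T` is split (order `q-1`) and `-σ_T` if `T` is
inert (order `q+1`), where `σ_T` is the unique quadratic character of `T`. -/
theorem stmt_19 (F : Type*) [Field F] [Fintype F] [DecidableEq F]
    (hodd : Odd (Fintype.card F))
    (H : Type*) [AddCommGroup H] [Module ℂ H] [FiniteDimensional ℂ H]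
    (ρ : Representation ℂ (Matrix.SpecialLinearGroup (Fin 2) F) H)
    (hdim : Module.finrank ℂ H = Fintype.card F)
    (hch : ∀ g : Matrix.SpecialLinearGroup (Fin 2) F,
      IsUnit ((g : Matrix (Fin 2) (Fin 2) F) - 1).det →
      LinearMap.trace ℂ H (ρ g) =
        ((quadraticChar F (-((g : Matrix (Fin 2) (Fin 2) F) - 1).det) : ℤ) : ℂ))
    (T : Subgroup (Matrix.SpecialLinearGroup (Fin 2) F)) [Fintype ↥T]
    (hcyc : IsCyclic ↥T)
    (hreg : ∀ g ∈ T, g ≠ 1 → IsUnit ((g : Matrix (Fin 2) (Fin 2) F) - 1).det)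
    (σT : ↥T →* ℂˣ) (hσ2 : σT * σT = 1) (hσne : σT ≠ 1) :
    (Fintype.card ↥T = Fintype.card F - 1 →
      ∀ g : ↥T, g ≠ 1 → LinearMap.trace ℂ H (ρ ↑g) = ((σT g : ℂˣ) : ℂ)) ∧
    (Fintype.card ↥T = Fintype.card F + 1 →
      ∀ g : ↥T, g ≠ 1 → LinearMap.trace ℂ H (ρ ↑g) = -((σT g : ℂˣ) : ℂ)) := by
  obtain ⟨γ, hγgen⟩ := hcyc.exists_generator
  have hσγ : σT γ = -1 := by
    have h2 : σT γ * σT γ = 1 := by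
      have := congrArg (fun f => f γ) hσ2
      simpa using this
    have h2' : (σT γ : ℂ) * (σT γ : ℂ) = 1 := by
      have := congrArg Units.val h2
      simpa using this
    rcases mul_self_eq_one_iff.mp h2' with h | h
    · exfalso
      apply hσne
      ext y
      obtain ⟨j, hj⟩ := hγgen y
      have h1 : σT γ = 1 := Units.ext (by simpa using h)
      rw [← hj, MonoidHom.map_zpow, h1, _root_.one_zpow]
      rfl
    · exact Units.ext (by simpa using h)
  set γ' : Matrix.SpecialLinearGroup (Fin 2) F := (γ : Matrix.SpecialLinearGroup (Fin 2) F)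
    with hγ'_def
  have hord : orderOf γ' = Fintype.card ↥T := by
    rw [hγ'_def, show ((γ : ↥T) : Matrix.SpecialLinearGroup (Fin 2) F) = T.subtype γ from rfl,
      orderOf_injective T.subtype T.subtype_injective]
    rw [orderOf_eq_card_of_forall_mem_zpowers hγgen, Nat.card_eq_fintype_card]
  have hxh : ∀ j : ℕ, γ' ^ j ≠ 1 → Matrix.trace ((γ' : Matrix (Fin 2) (Fin 2) F) ^ j) ≠ 2 := by
    intro j hj htr2
    have hmem : γ' ^ j ∈ T := pow_mem γ.2 j
    have hu := hreg _ hmem hj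
    rw [isUnit_iff_ne_zero] at hu
    apply hu
    rw [← Matrix.SpecialLinearGroup.coe_pow] at htr2
    rw [det_sub_one_fin_two, Matrix.SpecialLinearGroup.det_coe, htr2]
    norm_num
  have main : ∀ (ε : ℤ), ((ε = 1 ∧ Fintype.card ↥T = Fintype.card F - 1) ∨
      (ε = -1 ∧ Fintype.card ↥T = Fintype.card F + 1)) →
      ∀ g : ↥T, g ≠ 1 →
      LinearMap.trace ℂ H (ρ ↑g) = ((ε : ℂ)) * ((σT g : ℂˣ) : ℂ) := by
    intro ε hcase g hg
    obtain ⟨k, hk⟩ : ∃ k : ℕ, γ ^ k = g := by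
      simpa [Submonoid.mem_powers_iff] using (mem_powers_iff_mem_zpowers).mpr (hγgen g)
    have hcoe : γ' ^ k = (g : Matrix.SpecialLinearGroup (Fin 2) F) := by
      rw [hγ'_def, ← hk]
      exact (SubmonoidClass.coe_pow γ k).symm
    have hkne : γ' ^ k ≠ 1 := by
      rw [hcoe]
      intro h
      apply hg
      exact_mod_cast h
    have hkey := key_char hodd γ' hxh ε (Fintype.card ↥T) hord hcase k hkne
    have hu : IsUnit (((g : Matrix.SpecialLinearGroup (Fin 2) F) : Matrix (Fin 2) (Fin 2) F)
        - 1).det := by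
      apply hreg _ g.2
      intro h
      apply hg
      exact_mod_cast h
    rw [hch _ hu]
    have hmat : ((γ' ^ k : Matrix.SpecialLinearGroup (Fin 2) F) : Matrix (Fin 2) (Fin 2) F)
        = (((g : Matrix.SpecialLinearGroup (Fin 2) F)) : Matrix (Fin 2) (Fin 2) F) := by
      rw [hcoe]
    have hdetg : -((((g : Matrix.SpecialLinearGroup (Fin 2) F)) : Matrix (Fin 2) (Fin 2) F)
        - 1).det = Matrix.trace ((γ' : Matrix (Fin 2) (Fin 2) F) ^ k) - 2 := by
      rw [← hmat, det_sub_one_fin_two, Matrix.SpecialLinearGroup.det_coe,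
        Matrix.SpecialLinearGroup.coe_pow]
      ring
    rw [hdetg, hkey, ← hk, map_pow, hσγ]
    push_cast [Units.val_pow_eq_pow_val]
    ring
  constructor
  · intro hcard g hg
    have := main 1 (Or.inl ⟨rfl, hcard⟩) g hg
    rw [this]
    push_cast
    ring
  · intro hcard g hg
    have := main (-1) (Or.inr ⟨rfl, hcard⟩) g hg
    rw [this]
    push_cast
    ring
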